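/- The set of (ℤ/2)-characteristic matrices over P₀⁴(8) whose first four columns form the 4×4 identity matrix is exactly the seven-element set {a₁, a₂, a₃, a₄, a₅, a₆, a₇}: each aᵢ satisfies the nonsingularity condition at all twenty vertices in V₀, and every 4×8 matrix over ℤ/2 with identity first block satisfying the nonsingularity condition equals one of a₁,…,a₇. -/

import Mathlib

open Matrix

def V0 : List (Fin 4 → Fin 8) :=
  [![0,1,2,3], ![0,1,2,7], ![0,1,3,4], ![0,1,4,5], ![0,1,5,6], ![0,1,6,7], ![0,2,3,4], ![0,2,4,5], ![0,2,5,6], ![0,2,6,7], ![1,2,3,7], ![1,3,4,6], ![1,3,6,7], ![1,4,5,6], ![2,3,4,7], ![2,4,5,7], ![2,5,6,7], ![3,4,5,6], ![3,4,5,7], ![3,5,6,7]]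
def a1 : Matrix (Fin 4) (Fin 8) (ZMod 2) :=
  !![1, 0, 0, 0, 1, 0, 0, 1;
    0, 1, 0, 0, 1, 0, 1, 0;
    0, 0, 1, 0, 1, 1, 1, 0;
    0, 0, 0, 1, 0, 1, 0, 1]
def a2 : Matrix (Fin 4) (Fin 8) (ZMod 2) :=
  !![1, 0, 0, 0, 1, 0, 0, 1;
    0, 1, 0, 0, 1, 0, 1, 0;
    0, 0, 1, 0, 1, 1, 1, 1;
    0, 0, 0, 1, 0, 1, 0, 1]
def a3 : Matrix (Fin 4) (Fin 8) (ZMod 2) :=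
  !![1, 0, 0, 0, 0, 0, 1, 1;
    0, 1, 0, 0, 1, 0, 1, 0;
    0, 0, 1, 0, 1, 1, 1, 0;
    0, 0, 0, 1, 0, 1, 0, 1]
def a4 : Matrix (Fin 4) (Fin 8) (ZMod 2) :=
  !![1, 0, 0, 0, 0, 0, 1, 1;
    0, 1, 0, 0, 1, 0, 1, 0;
    0, 0, 1, 0, 1, 1, 0, 1;
    0, 0, 0, 1, 0, 1, 1, 1]
def a5 : Matrix (Fin 4) (Fin 8) (ZMod 2) :=
  !![1, 0, 0, 0, 0, 0, 1, 1;
    0, 1, 0, 0, 1, 1, 0, 1;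
    0, 0, 1, 0, 1, 0, 1, 0;
    0, 0, 0, 1, 0, 1, 1, 1]
def a6 : Matrix (Fin 4) (Fin 8) (ZMod 2) :=
  !![1, 0, 0, 0, 0, 0, 1, 1;
    0, 1, 0, 0, 1, 1, 1, 1;
    0, 0, 1, 0, 1, 0, 1, 0;
    0, 0, 0, 1, 0, 1, 0, 1]
def a7 : Matrix (Fin 4) (Fin 8) (ZMod 2) :=
  !![1, 0, 0, 0, 0, 1, 1, 1;
    0, 1, 0, 0, 1, 1, 0, 1;
    0, 0, 1, 0, 1, 1, 1, 0;
    0, 0, 0, 1, 1, 0, 1, 1]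

/-! ### Auxiliary machinery -/

/-- Explicit cofactor formula for 4×4 determinants over `ZMod 2` (all signs `+`). -/
def det4 (M : Matrix (Fin 4) (Fin 4) (ZMod 2)) : ZMod 2 :=
    M 0 0 * (M 1 1 * (M 2 2 * M 3 3 + M 2 3 * M 3 2)
           + M 1 2 * (M 2 1 * M 3 3 + M 2 3 * M 3 1)
           + M 1 3 * (M 2 1 * M 3 2 + M 2 2 * M 3 1))
  + M 0 1 * (M 1 0 * (M 2 2 * M 3 3 + M 2 3 * M 3 2)
           + M 1 2 * (M 2 0 * M 3 3 + M 2 3 * M 3 0)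
           + M 1 3 * (M 2 0 * M 3 2 + M 2 2 * M 3 0))
  + M 0 2 * (M 1 0 * (M 2 1 * M 3 3 + M 2 3 * M 3 1)
           + M 1 1 * (M 2 0 * M 3 3 + M 2 3 * M 3 0)
           + M 1 3 * (M 2 0 * M 3 1 + M 2 1 * M 3 0))
  + M 0 3 * (M 1 0 * (M 2 1 * M 3 2 + M 2 2 * M 3 1)
           + M 1 1 * (M 2 0 * M 3 2 + M 2 2 * M 3 0)
           + M 1 2 * (M 2 0 * M 3 1 + M 2 1 * M 3 0))

set_option maxHeartbeats 2000000 in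
lemma det4_eq (M : Matrix (Fin 4) (Fin 4) (ZMod 2)) : M.det = det4 M := by
  simp only [det4]
  simp [Matrix.det_succ_row_zero, Fin.sum_univ_succ, Matrix.det_fin_one,
    show (-1 : ZMod 2) = 1 from by decide,
    show (Fin.succ 2 : Fin 4) = 3 from rfl,
    show Fin.succAbove (1:Fin 4) 2 = 3 from rfl,
    show Fin.succAbove (2:Fin 4) 2 = 3 from rfl,
    show Fin.castSucc (2:Fin 3) = (2: Fin 4) from rfl,
    show Fin.succAbove (3:Fin 4) 2 = 2 from rfl]
  ring

/-- bit `k` of `n` as a natural number. -/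
def bt (n k : ℕ) : ℕ := (n >>> k) % 2

/-- entry `(i, j)` of the 4×8 matrix with identity left block whose columns
`4, 5` are encoded by the bits of `m` and columns `6, 7` by the bits of `c6, c7`. -/
def en3 (m c6 c7 i j : ℕ) : ℕ :=
  if j < 4 then (if i = j then 1 else 0)
  else if j = 4 then bt m i
  else if j = 5 then bt m (4+i)
  else if j = 6 then bt c6 i
  else bt c7 i

def d2N (m c6 c7 i1 i2 j1 j2 : ℕ) : ℕ :=
  en3 m c6 c7 i1 j1 * en3 m c6 c7 i2 j2 + en3 m c6 c7 i1 j2 * en3 m c6 c7 i2 j1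
def d3N (m c6 c7 i1 i2 i3 j1 j2 j3 : ℕ) : ℕ :=
  en3 m c6 c7 i1 j1 * d2N m c6 c7 i2 i3 j2 j3 + en3 m c6 c7 i1 j2 * d2N m c6 c7 i2 i3 j1 j3
  + en3 m c6 c7 i1 j3 * d2N m c6 c7 i2 i3 j1 j2
def d4N (m c6 c7 j1 j2 j3 j4 : ℕ) : ℕ :=
  en3 m c6 c7 0 j1 * d3N m c6 c7 1 2 3 j2 j3 j4 + en3 m c6 c7 0 j2 * d3N m c6 c7 1 2 3 j1 j3 j4
  + en3 m c6 c7 0 j3 * d3N m c6 c7 1 2 3 j1 j2 j4 + en3 m c6 c7 0 j4 * d3N m c6 c7 1 2 3 j1 j2 j3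

/-- the matrix over `ZMod 2` encoded by `m, c6, c7`. -/
def M3 (m c6 c7 : ℕ) : Matrix (Fin 4) (Fin 8) (ZMod 2) :=
  Matrix.of fun i j => ((en3 m c6 c7 (i : ℕ) (j : ℕ) : ℕ) : ZMod 2)

lemma bridge (m c6 c7 : ℕ) (v : Fin 4 → Fin 8) :
    det4 ((M3 m c6 c7).submatrix id v) =
      ((d4N m c6 c7 (v 0 : ℕ) (v 1 : ℕ) (v 2 : ℕ) (v 3 : ℕ) : ℕ) : ZMod 2) := by
  simp only [det4, d4N, d3N, d2N, M3, Matrix.submatrix_apply, id_eq, Matrix.of_apply,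
    show ((0 : Fin 4) : ℕ) = 0 from rfl, show ((1 : Fin 4) : ℕ) = 1 from rfl,
    show ((2 : Fin 4) : ℕ) = 2 from rfl, show ((3 : Fin 4) : ℕ) = 3 from rfl]
  push_cast
  ring

lemma castodd (x : ℕ) : ((x : ZMod 2) = 1) ↔ x % 2 = 1 := by
  constructor
  · intro h
    rcases Nat.mod_two_eq_zero_or_one x with h2 | h2
    · rw [← ZMod.natCast_mod x 2, h2] at h
      exact absurd h (by decide)
    · exact h2
  · intro h
    rw [← ZMod.natCast_mod x 2, h]
    rfl

set_option maxHeartbeats 4000000 in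
set_option synthInstance.maxHeartbeats 2000000 in
set_option synthInstance.maxSize 10000 in
set_option maxRecDepth 10000 in
lemma key : ∀ m < 256,
    (d4N m 0 0 0 1 3 4 % 2 = 1 ∧ d4N m 0 0 0 1 4 5 % 2 = 1 ∧
     d4N m 0 0 0 2 3 4 % 2 = 1 ∧ d4N m 0 0 0 2 4 5 % 2 = 1) →
    ∀ c6 < 16,
    (d4N m c6 0 0 1 5 6 % 2 = 1 ∧ d4N m c6 0 0 2 5 6 % 2 = 1 ∧
     d4N m c6 0 1 3 4 6 % 2 = 1 ∧ d4N m c6 0 1 4 5 6 % 2 = 1 ∧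
     d4N m c6 0 3 4 5 6 % 2 = 1) →
    ∀ c7 < 16,
    (d4N m c6 c7 0 1 2 7 % 2 = 1 ∧ d4N m c6 c7 0 1 6 7 % 2 = 1 ∧
     d4N m c6 c7 0 2 6 7 % 2 = 1 ∧ d4N m c6 c7 1 2 3 7 % 2 = 1 ∧
     d4N m c6 c7 1 3 6 7 % 2 = 1 ∧ d4N m c6 c7 2 3 4 7 % 2 = 1 ∧
     d4N m c6 c7 2 4 5 7 % 2 = 1 ∧ d4N m c6 c7 2 5 6 7 % 2 = 1 ∧
     d4N m c6 c7 3 4 5 7 % 2 = 1 ∧ d4N m c6 c7 3 5 6 7 % 2 = 1) →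
    ((m = 199 ∧ c6 = 6 ∧ c7 = 9) ∨ (m = 199 ∧ c6 = 6 ∧ c7 = 13) ∨
     (m = 198 ∧ c6 = 7 ∧ c7 = 9) ∨ (m = 198 ∧ c6 = 11 ∧ c7 = 13) ∨
     (m = 166 ∧ c6 = 13 ∧ c7 = 11) ∨ (m = 166 ∧ c6 = 7 ∧ c7 = 11) ∨
     (m = 126 ∧ c6 = 13 ∧ c7 = 11)) := by decide

lemma ne_zero_eq_one : ∀ z : ZMod 2, z ≠ 0 → z = 1 := by decide

lemma isUnit_of_det4 {M : Matrix (Fin 4) (Fin 4) (ZMod 2)} (h : det4 M = 1) :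
    IsUnit M.det := by
  rw [det4_eq, h]
  exact isUnit_one

/-- The (ℤ/2)-characteristic matrices over P₀⁴(8) with identity first block are
exactly a₁,…,a₇. -/
theorem stmt0 (Λ : Matrix (Fin 4) (Fin 8) (ZMod 2)) :
    (Λ.submatrix id (Fin.castLE (by omega : (4:ℕ) ≤ 8)) = 1 ∧
      ∀ v ∈ V0, IsUnit (Λ.submatrix id v).det) ↔
    (Λ = a1 ∨ Λ = a2 ∨ Λ = a3 ∨ Λ = a4 ∨ Λ = a5 ∨ Λ = a6 ∨ Λ = a7) := by
  constructor
  · rintro ⟨hid, hv⟩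
    have Hv : ∀ v ∈ V0, det4 (Λ.submatrix id v) = 1 := fun v hv' => by
      rw [← det4_eq]
      exact ne_zero_eq_one _ (hv v hv').ne_zero
    have hlt : ∀ i j, (Λ i j).val < 2 := fun i j => ZMod.val_lt _
    set m := (Λ 0 4).val + 2*(Λ 1 4).val + 4*(Λ 2 4).val + 8*(Λ 3 4).val
      + 16*(Λ 0 5).val + 32*(Λ 1 5).val + 64*(Λ 2 5).val + 128*(Λ 3 5).val with hm
    set c6 := (Λ 0 6).val + 2*(Λ 1 6).val + 4*(Λ 2 6).val + 8*(Λ 3 6).val with hc6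
    set c7 := (Λ 0 7).val + 2*(Λ 1 7).val + 4*(Λ 2 7).val + 8*(Λ 3 7).val with hc7
    have hE : ∀ i j : Fin 4, Λ i (Fin.castLE (by omega) j) = if i = j then 1 else 0 := by
      intro i j
      have := congrFun (congrFun hid i) j
      simpa [Matrix.one_apply] using this
    have hrep : Λ = M3 m c6 c7 := by
      ext i j
      fin_cases i <;> fin_cases j
      case _ => simpa [M3, en3] using hE 0 0
      case _ => simpa [M3, en3] using hE 0 1
      case _ => simpa [M3, en3] using hE 0 2
      case _ => simpa [M3, en3] using hE 0 3
      case _ =>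
        show Λ 0 4 = ((bt m 0 : ℕ) : ZMod 2)
        rw [show bt m 0 = (Λ 0 4).val from by
          simp only [bt, Nat.shiftRight_eq_div_pow, hm]
          have := hlt 0 4; have := hlt 1 4; have := hlt 2 4; have := hlt 3 4
          have := hlt 0 5; have := hlt 1 5; have := hlt 2 5; have := hlt 3 5
          omega]
        exact (ZMod.natCast_rightInverse (Λ 0 4)).symm
      case _ =>
        show Λ 0 5 = ((bt m 4 : ℕ) : ZMod 2)
        rw [show bt m 4 = (Λ 0 5).val from by
          simp only [bt, Nat.shiftRight_eq_div_pow, hm]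
          have := hlt 0 4; have := hlt 1 4; have := hlt 2 4; have := hlt 3 4
          have := hlt 0 5; have := hlt 1 5; have := hlt 2 5; have := hlt 3 5
          omega]
        exact (ZMod.natCast_rightInverse (Λ 0 5)).symm
      case _ =>
        show Λ 0 6 = ((bt c6 0 : ℕ) : ZMod 2)
        rw [show bt c6 0 = (Λ 0 6).val from by
          simp only [bt, Nat.shiftRight_eq_div_pow, hc6]
          have := hlt 0 6; have := hlt 1 6; have := hlt 2 6; have := hlt 3 6
          omega]
        exact (ZMod.natCast_rightInverse (Λ 0 6)).symm
      case _ =>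
        show Λ 0 7 = ((bt c7 0 : ℕ) : ZMod 2)
        rw [show bt c7 0 = (Λ 0 7).val from by
          simp only [bt, Nat.shiftRight_eq_div_pow, hc7]
          have := hlt 0 7; have := hlt 1 7; have := hlt 2 7; have := hlt 3 7
          omega]
        exact (ZMod.natCast_rightInverse (Λ 0 7)).symm
      case _ => simpa [M3, en3] using hE 1 0
      case _ => simpa [M3, en3] using hE 1 1
      case _ => simpa [M3, en3] using hE 1 2
      case _ => simpa [M3, en3] using hE 1 3
      case _ =>
        show Λ 1 4 = ((bt m 1 : ℕ) : ZMod 2)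
        rw [show bt m 1 = (Λ 1 4).val from by
          simp only [bt, Nat.shiftRight_eq_div_pow, hm]
          have := hlt 0 4; have := hlt 1 4; have := hlt 2 4; have := hlt 3 4
          have := hlt 0 5; have := hlt 1 5; have := hlt 2 5; have := hlt 3 5
          omega]
        exact (ZMod.natCast_rightInverse (Λ 1 4)).symm
      case _ =>
        show Λ 1 5 = ((bt m 5 : ℕ) : ZMod 2)
        rw [show bt m 5 = (Λ 1 5).val from by
          simp only [bt, Nat.shiftRight_eq_div_pow, hm]
          have := hlt 0 4; have := hlt 1 4; have := hlt 2 4; have := hlt 3 4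
          have := hlt 0 5; have := hlt 1 5; have := hlt 2 5; have := hlt 3 5
          omega]
        exact (ZMod.natCast_rightInverse (Λ 1 5)).symm
      case _ =>
        show Λ 1 6 = ((bt c6 1 : ℕ) : ZMod 2)
        rw [show bt c6 1 = (Λ 1 6).val from by
          simp only [bt, Nat.shiftRight_eq_div_pow, hc6]
          have := hlt 0 6; have := hlt 1 6; have := hlt 2 6; have := hlt 3 6
          omega]
        exact (ZMod.natCast_rightInverse (Λ 1 6)).symm
      case _ =>
        show Λ 1 7 = ((bt c7 1 : ℕ) : ZMod 2)
        rw [show bt c7 1 = (Λ 1 7).val from by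
          simp only [bt, Nat.shiftRight_eq_div_pow, hc7]
          have := hlt 0 7; have := hlt 1 7; have := hlt 2 7; have := hlt 3 7
          omega]
        exact (ZMod.natCast_rightInverse (Λ 1 7)).symm
      case _ => simpa [M3, en3] using hE 2 0
      case _ => simpa [M3, en3] using hE 2 1
      case _ => simpa [M3, en3] using hE 2 2
      case _ => simpa [M3, en3] using hE 2 3
      case _ =>
        show Λ 2 4 = ((bt m 2 : ℕ) : ZMod 2)
        rw [show bt m 2 = (Λ 2 4).val from by
          simp only [bt, Nat.shiftRight_eq_div_pow, hm]
          have := hlt 0 4; have := hlt 1 4; have := hlt 2 4; have := hlt 3 4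
          have := hlt 0 5; have := hlt 1 5; have := hlt 2 5; have := hlt 3 5
          omega]
        exact (ZMod.natCast_rightInverse (Λ 2 4)).symm
      case _ =>
        show Λ 2 5 = ((bt m 6 : ℕ) : ZMod 2)
        rw [show bt m 6 = (Λ 2 5).val from by
          simp only [bt, Nat.shiftRight_eq_div_pow, hm]
          have := hlt 0 4; have := hlt 1 4; have := hlt 2 4; have := hlt 3 4
          have := hlt 0 5; have := hlt 1 5; have := hlt 2 5; have := hlt 3 5
          omega]
        exact (ZMod.natCast_rightInverse (Λ 2 5)).symm
      case _ =>
        show Λ 2 6 = ((bt c6 2 : ℕ) : ZMod 2)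
        rw [show bt c6 2 = (Λ 2 6).val from by
          simp only [bt, Nat.shiftRight_eq_div_pow, hc6]
          have := hlt 0 6; have := hlt 1 6; have := hlt 2 6; have := hlt 3 6
          omega]
        exact (ZMod.natCast_rightInverse (Λ 2 6)).symm
      case _ =>
        show Λ 2 7 = ((bt c7 2 : ℕ) : ZMod 2)
        rw [show bt c7 2 = (Λ 2 7).val from by
          simp only [bt, Nat.shiftRight_eq_div_pow, hc7]
          have := hlt 0 7; have := hlt 1 7; have := hlt 2 7; have := hlt 3 7
          omega]
        exact (ZMod.natCast_rightInverse (Λ 2 7)).symm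
      case _ => simpa [M3, en3] using hE 3 0
      case _ => simpa [M3, en3] using hE 3 1
      case _ => simpa [M3, en3] using hE 3 2
      case _ => simpa [M3, en3] using hE 3 3
      case _ =>
        show Λ 3 4 = ((bt m 3 : ℕ) : ZMod 2)
        rw [show bt m 3 = (Λ 3 4).val from by
          simp only [bt, Nat.shiftRight_eq_div_pow, hm]
          have := hlt 0 4; have := hlt 1 4; have := hlt 2 4; have := hlt 3 4
          have := hlt 0 5; have := hlt 1 5; have := hlt 2 5; have := hlt 3 5
          omega]
        exact (ZMod.natCast_rightInverse (Λ 3 4)).symm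
      case _ =>
        show Λ 3 5 = ((bt m 7 : ℕ) : ZMod 2)
        rw [show bt m 7 = (Λ 3 5).val from by
          simp only [bt, Nat.shiftRight_eq_div_pow, hm]
          have := hlt 0 4; have := hlt 1 4; have := hlt 2 4; have := hlt 3 4
          have := hlt 0 5; have := hlt 1 5; have := hlt 2 5; have := hlt 3 5
          omega]
        exact (ZMod.natCast_rightInverse (Λ 3 5)).symm
      case _ =>
        show Λ 3 6 = ((bt c6 3 : ℕ) : ZMod 2)
        rw [show bt c6 3 = (Λ 3 6).val from by
          simp only [bt, Nat.shiftRight_eq_div_pow, hc6]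
          have := hlt 0 6; have := hlt 1 6; have := hlt 2 6; have := hlt 3 6
          omega]
        exact (ZMod.natCast_rightInverse (Λ 3 6)).symm
      case _ =>
        show Λ 3 7 = ((bt c7 3 : ℕ) : ZMod 2)
        rw [show bt c7 3 = (Λ 3 7).val from by
          simp only [bt, Nat.shiftRight_eq_div_pow, hc7]
          have := hlt 0 7; have := hlt 1 7; have := hlt 2 7; have := hlt 3 7
          omega]
        exact (ZMod.natCast_rightInverse (Λ 3 7)).symm
    have HD : ∀ v ∈ V0, ((d4N m c6 c7 (v 0 : ℕ) (v 1 : ℕ) (v 2 : ℕ) (v 3 : ℕ)) % 2 = 1) := by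
      intro v hv'
      have h := Hv v hv'
      rw [hrep, bridge, castodd] at h
      exact h
    have hm256 : m < 256 := by
      have := hlt 0 4; have := hlt 1 4; have := hlt 2 4; have := hlt 3 4
      have := hlt 0 5; have := hlt 1 5; have := hlt 2 5; have := hlt 3 5
      omega
    have hc616 : c6 < 16 := by
      have := hlt 0 6; have := hlt 1 6; have := hlt 2 6; have := hlt 3 6
      omega
    have hc716 : c7 < 16 := by
      have := hlt 0 7; have := hlt 1 7; have := hlt 2 7; have := hlt 3 7
      omega
    have hkey := key m hm256
      ⟨HD ![0,1,3,4] (by decide), HD ![0,1,4,5] (by decide),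
       HD ![0,2,3,4] (by decide), HD ![0,2,4,5] (by decide)⟩
      c6 hc616
      ⟨HD ![0,1,5,6] (by decide), HD ![0,2,5,6] (by decide),
       HD ![1,3,4,6] (by decide), HD ![1,4,5,6] (by decide),
       HD ![3,4,5,6] (by decide)⟩
      c7 hc716
      ⟨HD ![0,1,2,7] (by decide), HD ![0,1,6,7] (by decide),
       HD ![0,2,6,7] (by decide), HD ![1,2,3,7] (by decide),
       HD ![1,3,6,7] (by decide), HD ![2,3,4,7] (by decide),
       HD ![2,4,5,7] (by decide), HD ![2,5,6,7] (by decide),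
       HD ![3,4,5,7] (by decide), HD ![3,5,6,7] (by decide)⟩
    rcases hkey with ⟨h1, h2, h3⟩ | ⟨h1, h2, h3⟩ | ⟨h1, h2, h3⟩ | ⟨h1, h2, h3⟩ |
      ⟨h1, h2, h3⟩ | ⟨h1, h2, h3⟩ | ⟨h1, h2, h3⟩ <;>
      rw [h1, h2, h3] at hrep
    · exact Or.inl (by rw [hrep]; decide)
    · exact Or.inr (Or.inl (by rw [hrep]; decide))
    · exact Or.inr (Or.inr (Or.inl (by rw [hrep]; decide)))
    · exact Or.inr (Or.inr (Or.inr (Or.inl (by rw [hrep]; decide))))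
    · exact Or.inr (Or.inr (Or.inr (Or.inr (Or.inl (by rw [hrep]; decide)))))
    · exact Or.inr (Or.inr (Or.inr (Or.inr (Or.inr (Or.inl (by rw [hrep]; decide))))))
    · exact Or.inr (Or.inr (Or.inr (Or.inr (Or.inr (Or.inr (by rw [hrep]; decide))))))
  · rintro (rfl | rfl | rfl | rfl | rfl | rfl | rfl) <;>
      refine ⟨by decide, fun v hv => ?_⟩ <;>
      · simp only [V0] at hv
        fin_cases hv <;> exact isUnit_of_det4 (by decide)
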